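/- arXiv:1710.05391 — 4 statements merged into one kernel-verified Lean document; each statement's English description precedes it below -/
import Mathlib

section
/- The ideal I_O equals the ideal of P generated by all coefficients (in w) of q·E′(w)·F(w) − p·E(w)·F′(w), where ′ denotes the formal derivative d/dw on P[[w]]. -/
/-!
Statement 1.  With `P`, `E`, `F`, `I_O` as in the context, `I_O` equals the
ideal of `P` generated by all coefficients (in `w`) of
`q·E′(w)·F(w) − p·E(w)·F′(w)`, where `′` is the formal derivative `d/dw`.
-/

open MvPolynomial

/-- The index set `{i : 2 ≤ i ≤ p}` for the variables `e₂, …, e_p`. -/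
abbrev EIdx (p : ℕ) := {i : ℕ // 2 ≤ i ∧ i ≤ p}

/-- The variable set of `P = ℚ[e₂,…,e_p, f₂,…,f_q]`. -/
abbrev EFVar (p q : ℕ) := EIdx p ⊕ EIdx q

/-- The power series `E(w) = 1 + e₂w² + ⋯ + e_p wᵖ` in `P⟦w⟧`. -/
noncomputable def Eser (p q : ℕ) : PowerSeries (MvPolynomial (EFVar p q) ℚ) :=
  PowerSeries.mk fun n =>
    if n = 0 then 1 else if h : 2 ≤ n ∧ n ≤ p then X (Sum.inl ⟨n, h⟩) else 0

/-- The power series `F(w) = 1 + f₂w² + ⋯ + f_q w^q` in `P⟦w⟧`. -/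
noncomputable def Fser (p q : ℕ) : PowerSeries (MvPolynomial (EFVar p q) ℚ) :=
  PowerSeries.mk fun n =>
    if n = 0 then 1 else if h : 2 ≤ n ∧ n ≤ q then X (Sum.inr ⟨n, h⟩) else 0

/-- The ideal `I_O ⊆ P` generated by all coefficients of `E(w)^q − F(w)^p`. -/
noncomputable def IdealO (p q : ℕ) : Ideal (MvPolynomial (EFVar p q) ℚ) :=
  Ideal.span (Set.range fun n : ℕ =>
    PowerSeries.coeff n (Eser p q ^ q - Fser p q ^ p))

/-- The formal derivative `d/dw` on a power series ring. -/
noncomputable def psDeriv {R : Type*} [CommRing R] (f : PowerSeries R) : PowerSeries R :=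
  PowerSeries.mk fun n => ((n : R) + 1) * PowerSeries.coeff (n + 1) f


lemma psDeriv_eq {R : Type*} [CommRing R] (f : PowerSeries R) :
    psDeriv f = PowerSeries.derivative R f := by
  ext n
  simp [psDeriv, PowerSeries.coeff_derivative, mul_comm]

lemma psDeriv_map {R S : Type*} [CommRing R] [CommRing S] (φ : R →+* S) (f : PowerSeries R) :
    psDeriv (PowerSeries.map φ f) = PowerSeries.map φ (psDeriv f) := by
  ext n
  simp [psDeriv, PowerSeries.coeff_map]

lemma map_mk_eq_zero_iff {R : Type*} [CommRing R] (J : Ideal R) (S : PowerSeries R) :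
    PowerSeries.map (Ideal.Quotient.mk J) S = 0 ↔ ∀ n, PowerSeries.coeff n S ∈ J := by
  constructor
  · intro h n
    have := congrArg (PowerSeries.coeff n) h
    simpa [PowerSeries.coeff_map, Ideal.Quotient.eq_zero_iff_mem] using this
  · intro h
    ext n
    simpa [PowerSeries.coeff_map, Ideal.Quotient.eq_zero_iff_mem] using h n

lemma psDeriv_pow {R : Type*} [CommRing R] (f : PowerSeries R) (n : ℕ) :
    psDeriv (f ^ n) = (n : PowerSeries R) * f ^ (n - 1) * psDeriv f := by
  rw [psDeriv_eq, psDeriv_eq, Derivation.leibniz_pow]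
  rw [smul_eq_mul, nsmul_eq_mul, mul_assoc]

lemma aux_zero {R : Type*} [CommRing R] [Algebra ℚ R]
    (F G A : PowerSeries R) (hF : PowerSeries.coeff 0 F = 1)
    (hG0 : PowerSeries.coeff 0 G = 0)
    (heq : F * psDeriv G = A * G) : G = 0 := by
  ext n
  induction n using Nat.strong_induction_on with
  | _ n ih =>
    match n with
    | 0 => simpa using hG0
    | n + 1 =>
      have h := congrArg (PowerSeries.coeff n) heq
      rw [PowerSeries.coeff_mul, PowerSeries.coeff_mul] at h
      have hR : ∀ x ∈ Finset.HasAntidiagonal.antidiagonal n,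
          PowerSeries.coeff x.1 A * PowerSeries.coeff x.2 G = 0 := by
        intro x hx
        have hx2 : x.2 < n + 1 :=
          Nat.lt_succ_of_le (Finset.HasAntidiagonal.antidiagonal.snd_le hx)
        rw [ih x.2 hx2]; simp
      rw [Finset.sum_eq_zero hR] at h
      have hL : ∑ x ∈ Finset.HasAntidiagonal.antidiagonal n,
          PowerSeries.coeff x.1 F * PowerSeries.coeff x.2 (psDeriv G)
          = ((n : R) + 1) * PowerSeries.coeff (n + 1) G := by
        rw [Finset.sum_eq_single (0, n)]
        · simp [psDeriv, hF]
        · intro x hx hxne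
          have hx1 : x.1 + x.2 = n := Finset.HasAntidiagonal.mem_antidiagonal.mp hx
          have hx2 : x.2 < n := by
            rcases Nat.lt_or_ge x.2 n with h' | h'
            · exact h'
            · exfalso
              have : x.2 = n := le_antisymm (by omega) h'
              exact hxne (by ext <;> simp [this] <;> omega)
          have : PowerSeries.coeff x.2 (psDeriv G) = 0 := by
            simp only [psDeriv, PowerSeries.coeff_mk]
            rw [ih (x.2 + 1) (by omega)]; simp
          rw [this, mul_zero]
        · intro hne
          exact absurd (by simp) hne
      rw [hL] at h
      have hu : IsUnit ((n : R) + 1) := by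
        have : ((n : R) + 1) = algebraMap ℚ R ((n : ℚ) + 1) := by
          push_cast; simp
        rw [this]
        exact (isUnit_iff_ne_zero.mpr (by positivity)).map (algebraMap ℚ R)
      exact (hu.mul_right_eq_zero).mp h

lemma span_coeffs_eq {R : Type*} [CommRing R] [Algebra ℚ R]
    (p q : ℕ) (hp : 0 < p) (hq : 0 < q) (E F : PowerSeries R)
    (hE0 : PowerSeries.coeff 0 E = 1) (hF0 : PowerSeries.coeff 0 F = 1) :
    Ideal.span (Set.range fun n : ℕ => PowerSeries.coeff n (E ^ q - F ^ p)) =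
    Ideal.span (Set.range fun n : ℕ => PowerSeries.coeff n
      ((q : PowerSeries R) * psDeriv E * F - (p : PowerSeries R) * E * psDeriv F)) := by
  set G := E ^ q - F ^ p with hG
  set H := (q : PowerSeries R) * psDeriv E * F - (p : PowerSeries R) * E * psDeriv F with hH
  apply le_antisymm
  · -- coeffs of G ∈ span coeffs of H
    set J := Ideal.span (Set.range fun n : ℕ => PowerSeries.coeff n H) with hJ
    rw [Ideal.span_le]
    rintro _ ⟨n, rfl⟩
    set φ := Ideal.Quotient.mk J with hφ
    set Em := PowerSeries.map φ E with hEm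
    set Fm := PowerSeries.map φ F with hFm
    have hEm0 : PowerSeries.coeff 0 Em = 1 := by
      rw [hEm, PowerSeries.coeff_map, hE0, map_one]
    have hFm0 : PowerSeries.coeff 0 Fm = 1 := by
      rw [hFm, PowerSeries.coeff_map, hF0, map_one]
    have hH0 : PowerSeries.map φ H = 0 := by
      rw [map_mk_eq_zero_iff]
      intro m
      exact Ideal.subset_span ⟨m, rfl⟩
    have hh : (q : PowerSeries _) * psDeriv Em * Fm
        = (p : PowerSeries _) * Em * psDeriv Fm := by
      rw [hH] at hH0
      simp only [map_sub, map_mul, map_natCast, ← psDeriv_map] at hH0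
      rw [sub_eq_zero] at hH0
      exact hH0
    have hE1 : Em ^ (q - 1) * Em = Em ^ q := by
      rw [← pow_succ, Nat.sub_add_cancel hq]
    have hF1 : Fm ^ (p - 1) * Fm = Fm ^ p := by
      rw [← pow_succ, Nat.sub_add_cancel hp]
    have key : Fm * psDeriv (Em ^ q - Fm ^ p)
        = ((p : PowerSeries _) * psDeriv Fm) * (Em ^ q - Fm ^ p) := by
      have e1 : psDeriv (Em ^ q - Fm ^ p) = psDeriv (Em ^ q) - psDeriv (Fm ^ p) := by
        rw [psDeriv_eq, psDeriv_eq, psDeriv_eq, map_sub]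
      rw [e1, psDeriv_pow, psDeriv_pow]
      calc Fm * ((q : PowerSeries _) * Em ^ (q-1) * psDeriv Em
              - (p : PowerSeries _) * Fm ^ (p-1) * psDeriv Fm)
          = Em ^ (q-1) * ((q : PowerSeries _) * psDeriv Em * Fm)
              - (p : PowerSeries _) * (Fm ^ (p-1) * Fm) * psDeriv Fm := by ring
        _ = Em ^ (q-1) * ((p : PowerSeries _) * Em * psDeriv Fm)
              - (p : PowerSeries _) * Fm ^ p * psDeriv Fm := by rw [hh, hF1]
        _ = (p : PowerSeries _) * (Em ^ (q-1) * Em) * psDeriv Fm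
              - (p : PowerSeries _) * Fm ^ p * psDeriv Fm := by ring
        _ = _ := by rw [hE1]; ring
    have hG0' : PowerSeries.coeff 0 (Em ^ q - Fm ^ p) = 0 := by
      rw [map_sub, PowerSeries.coeff_zero_eq_constantCoeff_apply,
        PowerSeries.coeff_zero_eq_constantCoeff_apply, map_pow, map_pow,
        ← PowerSeries.coeff_zero_eq_constantCoeff_apply,
        ← PowerSeries.coeff_zero_eq_constantCoeff_apply, hEm0, hFm0, one_pow, one_pow, sub_self]
    have hZ : Em ^ q - Fm ^ p = 0 := aux_zero Fm _ _ hFm0 hG0' key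
    have hmapG : PowerSeries.map φ G = 0 := by
      rw [hG, map_sub, map_pow, map_pow]
      exact hZ
    exact (map_mk_eq_zero_iff J G).mp hmapG n
  · -- coeffs of H ∈ span coeffs of G
    set J := Ideal.span (Set.range fun n : ℕ => PowerSeries.coeff n G) with hJ
    rw [Ideal.span_le]
    rintro _ ⟨n, rfl⟩
    set φ := Ideal.Quotient.mk J with hφ
    set Em := PowerSeries.map φ E with hEm
    set Fm := PowerSeries.map φ F with hFm
    have hEm0 : PowerSeries.coeff 0 Em = 1 := by
      rw [hEm, PowerSeries.coeff_map, hE0, map_one]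
    have hG0 : PowerSeries.map φ G = 0 := by
      rw [map_mk_eq_zero_iff]
      intro m
      exact Ideal.subset_span ⟨m, rfl⟩
    have hEq : Em ^ q = Fm ^ p := by
      rw [hG, map_sub, map_pow, map_pow, sub_eq_zero] at hG0
      exact hG0
    have hd : (q : PowerSeries _) * Em ^ (q-1) * psDeriv Em
        = (p : PowerSeries _) * Fm ^ (p-1) * psDeriv Fm := by
      have := congrArg psDeriv hEq
      rwa [psDeriv_pow, psDeriv_pow] at this
    have hE1 : Em ^ (q - 1) * Em = Em ^ q := by
      rw [← pow_succ, Nat.sub_add_cancel hq]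
    have hF1 : Fm ^ (p - 1) * Fm = Fm ^ p := by
      rw [← pow_succ, Nat.sub_add_cancel hp]
    have key : Em ^ (q-1) * ((q : PowerSeries _) * psDeriv Em * Fm
        - (p : PowerSeries _) * Em * psDeriv Fm) = 0 := by
      calc Em ^ (q-1) * ((q : PowerSeries _) * psDeriv Em * Fm
              - (p : PowerSeries _) * Em * psDeriv Fm)
          = ((q : PowerSeries _) * Em ^ (q-1) * psDeriv Em) * Fm
              - (p : PowerSeries _) * (Em ^ (q-1) * Em) * psDeriv Fm := by ring
        _ = ((p : PowerSeries _) * Fm ^ (p-1) * psDeriv Fm) * Fm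
              - (p : PowerSeries _) * Em ^ q * psDeriv Fm := by rw [hd, hE1]
        _ = (p : PowerSeries _) * (Fm ^ (p-1) * Fm) * psDeriv Fm
              - (p : PowerSeries _) * Fm ^ p * psDeriv Fm := by rw [hEq]; ring
        _ = 0 := by rw [hF1]; ring
    have hu : IsUnit (Em ^ (q - 1)) := by
      apply IsUnit.pow
      rw [PowerSeries.isUnit_iff_constantCoeff, ← PowerSeries.coeff_zero_eq_constantCoeff_apply,
        hEm0]
      exact isUnit_one
    have hHm : (q : PowerSeries _) * psDeriv Em * Fm
        - (p : PowerSeries _) * Em * psDeriv Fm = 0 := (hu.mul_right_eq_zero).mp key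
    have hmapH : PowerSeries.map φ H = 0 := by
      rw [hH]
      simp only [map_sub, map_mul, map_natCast, ← psDeriv_map]
      exact hHm
    exact (map_mk_eq_zero_iff J H).mp hmapH n

theorem IdealO_eq_span_logDeriv_coeffs (p q : ℕ) (hp : 0 < p) (hq : 0 < q)
    (hpq : Nat.Coprime p q) :
    IdealO p q = Ideal.span (Set.range fun n : ℕ =>
      PowerSeries.coeff n
        ((q : PowerSeries (MvPolynomial (EFVar p q) ℚ)) * psDeriv (Eser p q) * Fser p q -
         (p : PowerSeries (MvPolynomial (EFVar p q) ℚ)) * Eser p q * psDeriv (Fser p q))) := by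
  rw [IdealO]
  exact span_coeffs_eq p q hp hq (Eser p q) (Fser p q) (by simp [Eser]) (by simp [Fser])
end

section
/- For every integer i > q, the coefficient g_i lies in the ideal of P′ generated by g_{q+1}, g_{q+2}, …, g_{p+q−1}. -/
/-!
Statement 6.  Let `p, q` be coprime positive integers, `P′ = ℚ[e₂,…,e_p]`,
`E(w) = 1 + e₂w² + ⋯ + e_p wᵖ ∈ P′⟦w⟧`, and let `G ∈ P′⟦w⟧` have constant
coefficient `1` with `G^p = E(w)^q` (so `G = E(w)^{q/p}`), with coefficients
`g_i`.  Then for every `i > q`, `g_i` lies in the ideal of `P′` generated by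
`g_{q+1}, …, g_{p+q−1}`.
-/

open MvPolynomial
open scoped PowerSeries

/-- The power series `E(w) = 1 + e₂w² + ⋯ + e_p wᵖ` in `P′⟦w⟧`. -/
noncomputable def Eser' (p : ℕ) : PowerSeries (MvPolynomial (EIdx p) ℚ) :=
  PowerSeries.mk fun n =>
    if n = 0 then 1 else if h : 2 ≤ n ∧ n ≤ p then X ⟨n, h⟩ else 0

lemma coeff_Eser' (p n : ℕ) : PowerSeries.coeff n (Eser' p) =
    if n = 0 then 1 else if h : 2 ≤ n ∧ n ≤ p then X ⟨n, h⟩ else 0 := by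
  simp [Eser']

lemma constCoeff_Eser' (p : ℕ) :
    PowerSeries.constantCoeff (Eser' p) = 1 := by
  rw [← PowerSeries.coeff_zero_eq_constantCoeff, coeff_Eser']; simp

lemma key_eq (p q : ℕ) (hp : 0 < p) (hq : 0 < q)
    (G : PowerSeries (MvPolynomial (EIdx p) ℚ))
    (hGp : G ^ p = Eser' p ^ q) :
    (p : PowerSeries (MvPolynomial (EIdx p) ℚ)) *
        (d⁄dX (MvPolynomial (EIdx p) ℚ) G * Eser' p)
      = (q : PowerSeries (MvPolynomial (EIdx p) ℚ)) *
        (d⁄dX (MvPolynomial (EIdx p) ℚ) (Eser' p) * G) := by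
  have hEne : (Eser' p) ^ q ≠ 0 := by
    intro h
    have := congrArg (PowerSeries.constantCoeff) h
    rw [map_pow, constCoeff_Eser', one_pow, map_zero] at this
    exact one_ne_zero this
  have h1 : (p : ℕ) • G ^ (p - 1) • d⁄dX (MvPolynomial (EIdx p) ℚ) G
      = (q : ℕ) • (Eser' p) ^ (q - 1) • d⁄dX (MvPolynomial (EIdx p) ℚ) (Eser' p) := by
    have := congrArg (d⁄dX (MvPolynomial (EIdx p) ℚ)) hGp
    rwa [Derivation.leibniz_pow, Derivation.leibniz_pow] at this
  simp only [nsmul_eq_mul, smul_eq_mul] at h1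
  have e1 : G ^ (p - 1) * G = G ^ p := by
    rw [← pow_succ]; congr 1; omega
  have e2 : (Eser' p) ^ (q - 1) * Eser' p = (Eser' p) ^ q := by
    rw [← pow_succ]; congr 1; omega
  apply mul_left_cancel₀ hEne
  calc (Eser' p) ^ q * ((p : PowerSeries (MvPolynomial (EIdx p) ℚ)) * (d⁄dX (MvPolynomial (EIdx p) ℚ) G * Eser' p))
      = (G ^ (p-1) * G) * ((p : PowerSeries (MvPolynomial (EIdx p) ℚ)) * (d⁄dX (MvPolynomial (EIdx p) ℚ) G * Eser' p)) := by rw [e1, hGp]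
    _ = ((p : ℕ) * (G ^ (p - 1) * d⁄dX (MvPolynomial (EIdx p) ℚ) G)) * (G * Eser' p) := by
        push_cast; ring
    _ = ((q : ℕ) * ((Eser' p) ^ (q - 1) * d⁄dX (MvPolynomial (EIdx p) ℚ) (Eser' p))) * (G * Eser' p) := by rw [h1]
    _ = ((Eser' p) ^ (q-1) * Eser' p) * ((q : PowerSeries (MvPolynomial (EIdx p) ℚ)) * (d⁄dX (MvPolynomial (EIdx p) ℚ) (Eser' p) * G)) := by
        push_cast; ring
    _ = (Eser' p) ^ q * ((q : PowerSeries (MvPolynomial (EIdx p) ℚ)) * (d⁄dX (MvPolynomial (EIdx p) ℚ) (Eser' p) * G)) := by rw [e2]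

lemma coeff_rec (p q : ℕ) (hp : 0 < p) (hq : 0 < q)
    (G : PowerSeries (MvPolynomial (EIdx p) ℚ))
    (hGp : G ^ p = Eser' p ^ q) (n : ℕ) :
    ∑ k ∈ Finset.range (n+2),
      (((p * (n+1-k) : ℕ) : MvPolynomial (EIdx p) ℚ) - ((q * k : ℕ) : MvPolynomial (EIdx p) ℚ)) *
        (PowerSeries.coeff k (Eser' p) * PowerSeries.coeff (n+1-k) G) = 0 := by
  have h := congrArg (PowerSeries.coeff n) (key_eq p q hp hq G hGp)
  rw [← map_natCast (PowerSeries.C (R := MvPolynomial (EIdx p) ℚ)) p,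
      ← map_natCast (PowerSeries.C (R := MvPolynomial (EIdx p) ℚ)) q,
      PowerSeries.coeff_C_mul, PowerSeries.coeff_C_mul,
      PowerSeries.coeff_mul, PowerSeries.coeff_mul,
      Finset.Nat.sum_antidiagonal_eq_sum_range_succ_mk,
      Finset.Nat.sum_antidiagonal_eq_sum_range_succ_mk] at h
  simp only [PowerSeries.coeff_derivative] at h
  -- split the goal sum
  have split : ∀ k ∈ Finset.range (n+2),
      (((p * (n+1-k) : ℕ) : MvPolynomial (EIdx p) ℚ) - ((q * k : ℕ) : MvPolynomial (EIdx p) ℚ)) *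
        (PowerSeries.coeff k (Eser' p) * PowerSeries.coeff (n+1-k) G)
      = ((p * (n+1-k) : ℕ) : MvPolynomial (EIdx p) ℚ) *
          (PowerSeries.coeff k (Eser' p) * PowerSeries.coeff (n+1-k) G)
        - ((q * k : ℕ) : MvPolynomial (EIdx p) ℚ) *
          (PowerSeries.coeff k (Eser' p) * PowerSeries.coeff (n+1-k) G) := by
    intro k _; ring
  rw [Finset.sum_congr rfl split, Finset.sum_sub_distrib]
  have hS1 : ∑ k ∈ Finset.range (n+2),
      ((p * (n+1-k) : ℕ) : MvPolynomial (EIdx p) ℚ) *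
        (PowerSeries.coeff k (Eser' p) * PowerSeries.coeff (n+1-k) G)
      = ((p : ℕ) : MvPolynomial (EIdx p) ℚ) *
        ∑ k ∈ Finset.range (n+1),
          PowerSeries.coeff (k+1) G * ((k:MvPolynomial (EIdx p) ℚ)+1) *
            PowerSeries.coeff (n-k) (Eser' p) := by
    rw [Finset.sum_range_succ]
    simp only [Nat.sub_self, Nat.mul_zero, Nat.cast_zero, zero_mul, add_zero]
    rw [← Finset.sum_range_reflect, Finset.mul_sum]
    apply Finset.sum_congr rfl
    intro k hk
    have hk' : k ≤ n := by simpa using Nat.lt_succ_iff.mp (Finset.mem_range.mp hk)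
    have h1 : n + 1 - (n - k) = k + 1 := by omega
    have h2 : n + 1 - 1 - k = n - k := by omega
    rw [h2, h1]
    push_cast
    ring
  have hS2 : ∑ k ∈ Finset.range (n+2),
      ((q * k : ℕ) : MvPolynomial (EIdx p) ℚ) *
        (PowerSeries.coeff k (Eser' p) * PowerSeries.coeff (n+1-k) G)
      = ((q : ℕ) : MvPolynomial (EIdx p) ℚ) *
        ∑ k ∈ Finset.range (n+1),
          PowerSeries.coeff (k+1) (Eser' p) * ((k:MvPolynomial (EIdx p) ℚ)+1) *
            PowerSeries.coeff (n-k) G := by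
    rw [Finset.sum_range_succ']
    simp only [Nat.mul_zero, Nat.cast_zero, zero_mul, add_zero]
    rw [Finset.mul_sum]
    apply Finset.sum_congr rfl
    intro k hk
    have h1 : n + 1 - (k + 1) = n - k := by omega
    rw [h1]
    push_cast
    ring
  rw [hS1, hS2, h, sub_self]

theorem coeff_root_mem_span (p q : ℕ) (hp : 0 < p) (hq : 0 < q)
    (hpq : Nat.Coprime p q) (G : PowerSeries (MvPolynomial (EIdx p) ℚ))
    (hG1 : PowerSeries.constantCoeff G = 1)
    (hGp : G ^ p = Eser' p ^ q) :
    ∀ i : ℕ, q < i →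
      PowerSeries.coeff i G ∈
        Ideal.span ((fun j => PowerSeries.coeff j G) ''
          Set.Icc (q + 1) (p + q - 1)) := by
  intro i
  induction i using Nat.strong_induction_on with
  | _ i IH =>
  intro hi
  by_cases hle : i ≤ p + q - 1
  · exact Ideal.subset_span ⟨i, Set.mem_Icc.mpr ⟨hi, hle⟩, rfl⟩
  · have hpq' : p + q ≤ i := by omega
    obtain ⟨n, rfl⟩ : ∃ n, i = n + 1 := ⟨i - 1, by omega⟩
    have h0 := coeff_rec p q hp hq G hGp n
    rw [Finset.sum_range_succ'] at h0
    rw [coeff_Eser' p 0] at h0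
    simp only [Nat.sub_zero, Nat.mul_zero, Nat.cast_zero, sub_zero, eq_self_iff_true, if_true, one_mul] at h0
    have hx := eq_neg_of_add_eq_zero_right h0
    have hS : ∑ k ∈ Finset.range (n + 1),
        (((p * (n + 1 - (k + 1)) : ℕ) : MvPolynomial (EIdx p) ℚ)
          - ((q * (k + 1) : ℕ) : MvPolynomial (EIdx p) ℚ)) *
          (PowerSeries.coeff (k+1) (Eser' p) * PowerSeries.coeff (n + 1 - (k + 1)) G)
        ∈ Ideal.span ((fun j => PowerSeries.coeff j G) ''
            Set.Icc (q + 1) (p + q - 1)) := by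
      apply Ideal.sum_mem
      intro k hk
      have hkn : k < n + 1 := Finset.mem_range.mp hk
      rw [coeff_Eser' p (k+1)]
      by_cases hk2 : 2 ≤ k + 1 ∧ k + 1 ≤ p
      · rw [if_neg (Nat.succ_ne_zero k), dif_pos hk2]
        by_cases hmq : n + 1 - (k + 1) = q
        · have hkp : k + 1 = p := by omega
          have hc : (((p * (n + 1 - (k + 1)) : ℕ) : MvPolynomial (EIdx p) ℚ)
              - ((q * (k + 1) : ℕ) : MvPolynomial (EIdx p) ℚ)) = 0 := by
            rw [hmq, hkp]
            push_cast
            ring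
          rw [hc, zero_mul]
          exact zero_mem _
        · have hq' : q < n + 1 - (k + 1) := by omega
          have hlt : n + 1 - (k + 1) < n + 1 := by omega
          exact Ideal.mul_mem_left _ _ (Ideal.mul_mem_left _ _ (IH _ hlt hq'))
      · rw [if_neg (Nat.succ_ne_zero k), dif_neg hk2, zero_mul, mul_zero]
        exact zero_mem _
    have hmem : ((p * (n + 1) : ℕ) : MvPolynomial (EIdx p) ℚ) *
        PowerSeries.coeff (n + 1) G ∈
        Ideal.span ((fun j => PowerSeries.coeff j G) ''
          Set.Icc (q + 1) (p + q - 1)) := by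
      rw [hx]; exact neg_mem hS
    have hne : (((p * (n + 1) : ℕ) : ℚ)) ≠ 0 :=
      Nat.cast_ne_zero.mpr (by positivity)
    have hrw : PowerSeries.coeff (n + 1) G =
        algebraMap ℚ (MvPolynomial (EIdx p) ℚ) (((p * (n + 1) : ℕ) : ℚ))⁻¹ *
          (((p * (n + 1) : ℕ) : MvPolynomial (EIdx p) ℚ) *
            PowerSeries.coeff (n + 1) G) := by
      rw [← map_natCast (algebraMap ℚ (MvPolynomial (EIdx p) ℚ)) (p * (n + 1)),
        ← mul_assoc, ← map_mul, inv_mul_cancel₀ hne, map_one, one_mul]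
    rw [hrw]
    exact Ideal.mul_mem_left _ _ hmem
end

section
/- The ℚ-algebra homomorphism P → R̃/(ε−1, s) sending e_i to the class of p·e_i for 2 ≤ i ≤ p and f_j to the class of q·f_j for 2 ≤ j ≤ q annihilates the ideal I_O and induces a ring isomorphism P/I_O ≅ R̃/(ε−1, s); that is, the specialization of R̃ at ε = 1, s = 0 is isomorphic to O_{q/p}. -/
/-!
Statement 9.  With `P`, `E`, `F`, `I_O` and `S = ℚ[ε,s,e₂,…,e_p,f₂,…,f_q]`,
`R̃ = S/(F₀,…,F_{pq})` as in the context, the ℚ-algebra homomorphism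
`P → R̃/(ε−1, s)` with `e_i ↦ [p·e_i]`, `f_j ↦ [q·f_j]` annihilates `I_O` and
induces a ring isomorphism `P/I_O ≅ R̃/(ε−1, s)` (i.e. it is surjective with
kernel `I_O`).
-/

open MvPolynomial

/-- The variable set of `S = ℚ[ε, s, e₂,…,e_p, f₂,…,f_q]`:
`Sum.inl 0 = ε`, `Sum.inl 1 = s`. -/
abbrev SVar (p q : ℕ) := Fin 2 ⊕ EFVar p q

/-- The elements `e₁ = (q(p−1)/2)·s`, `e₂, …, e_p` of `S` (and `0` otherwise). -/
noncomputable def eS (p q : ℕ) : ℕ → MvPolynomial (SVar p q) ℚ := fun i =>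
  if i = 1 then C ((q : ℚ) * ((p : ℚ) - 1) / 2) * X (Sum.inl 1)
  else if h : 2 ≤ i ∧ i ≤ p then X (Sum.inr (Sum.inl ⟨i, h⟩)) else 0

/-- The elements `f₁ = (p(q−1)/2)·s`, `f₂, …, f_q` of `S` (and `0` otherwise). -/
noncomputable def fS (p q : ℕ) : ℕ → MvPolynomial (SVar p q) ℚ := fun j =>
  if j = 1 then C ((p : ℚ) * ((q : ℚ) - 1) / 2) * X (Sum.inl 1)
  else if h : 2 ≤ j ∧ j ≤ q then X (Sum.inr (Sum.inr ⟨j, h⟩)) else 0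

/-- `A(z) = z^p + Σ_{i=1}^p p·ε·e_i·z^{p−i} ∈ S[z]`. -/
noncomputable def Apoly (p q : ℕ) : Polynomial (MvPolynomial (SVar p q) ℚ) :=
  Polynomial.X ^ p + ∑ i ∈ Finset.Icc 1 p,
    Polynomial.C ((p : MvPolynomial (SVar p q) ℚ) * X (Sum.inl 0) * eS p q i) *
      Polynomial.X ^ (p - i)

/-- `B(z) = z^q + Σ_{j=1}^q q·ε·f_j·z^{q−j} ∈ S[z]`. -/
noncomputable def Bpoly (p q : ℕ) : Polynomial (MvPolynomial (SVar p q) ℚ) :=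
  Polynomial.X ^ q + ∑ j ∈ Finset.Icc 1 q,
    Polynomial.C ((q : MvPolynomial (SVar p q) ℚ) * X (Sum.inl 0) * fS p q j) *
      Polynomial.X ^ (q - j)

/-- `∏_{j=0}^{q−1} A(z + jpsε) − ∏_{i=0}^{p−1} B(z + iqsε) ∈ S[z]`. -/
noncomputable def ABdiff (p q : ℕ) : Polynomial (MvPolynomial (SVar p q) ℚ) :=
  (∏ j ∈ Finset.range q, (Apoly p q).comp
      (Polynomial.X + Polynomial.C (((j * p : ℕ) : MvPolynomial (SVar p q) ℚ) *
        X (Sum.inl 1) * X (Sum.inl 0)))) -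
    ∏ i ∈ Finset.range p, (Bpoly p q).comp
      (Polynomial.X + Polynomial.C (((i * q : ℕ) : MvPolynomial (SVar p q) ℚ) *
        X (Sum.inl 1) * X (Sum.inl 0)))

/-- The ideal `(F₀, …, F_{pq}) ⊆ S` of the coefficients of `z^d`, `0 ≤ d ≤ pq`. -/
noncomputable def IdealF (p q : ℕ) : Ideal (MvPolynomial (SVar p q) ℚ) :=
  Ideal.span ((fun d => (ABdiff p q).coeff d) '' Set.Iic (p * q))

/-- `R̃ = S/(F₀,…,F_{pq})`. -/
abbrev Rtil (p q : ℕ) := MvPolynomial (SVar p q) ℚ ⧸ IdealF p q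

/-- The class of `ε` in `R̃`. -/
noncomputable def εcls (p q : ℕ) : Rtil p q := Ideal.Quotient.mk _ (X (Sum.inl 0))

/-- The class of `s` in `R̃`. -/
noncomputable def scls (p q : ℕ) : Rtil p q := Ideal.Quotient.mk _ (X (Sum.inl 1))

/-- The ideal `(ε−1, s)` of `R̃`. -/
noncomputable def specIdeal (p q : ℕ) : Ideal (Rtil p q) :=
  Ideal.span {εcls p q - 1, scls p q}

/-- The ℚ-algebra homomorphism `P → R̃/(ε−1, s)`, `e_i ↦ [p·e_i]`, `f_j ↦ [q·f_j]`. -/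
noncomputable def specMap (p q : ℕ) :
    MvPolynomial (EFVar p q) ℚ →ₐ[ℚ] (Rtil p q ⧸ specIdeal p q) :=
  aeval (Sum.elim
    (fun i => Ideal.Quotient.mk (specIdeal p q) (Ideal.Quotient.mk (IdealF p q)
      ((p : MvPolynomial (SVar p q) ℚ) * X (Sum.inr (Sum.inl i)))))
    (fun j => Ideal.Quotient.mk (specIdeal p q) (Ideal.Quotient.mk (IdealF p q)
      ((q : MvPolynomial (SVar p q) ℚ) * X (Sum.inr (Sum.inr j))))))
namespace Spec9

/-- Coefficient of a generic polynomial written as a sum. -/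
lemma coeff_csum {R : Type*} [CommRing R] (p : ℕ) (c : ℕ → R) (n : ℕ) :
    (∑ m ∈ Finset.range (p + 1), Polynomial.C (c m) * Polynomial.X ^ m).coeff n =
      if n ≤ p then c n else 0 := by
  rw [Polynomial.finset_sum_coeff]
  simp only [Polynomial.coeff_C_mul, Polynomial.coeff_X_pow, mul_ite, mul_one, mul_zero]
  rw [Finset.sum_ite_eq]
  simp [Nat.lt_succ_iff]

lemma natDegree_csum_le {R : Type*} [CommRing R] (p : ℕ) (c : ℕ → R) :
    (∑ m ∈ Finset.range (p + 1), Polynomial.C (c m) * Polynomial.X ^ m).natDegree ≤ p := by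
  rw [Polynomial.natDegree_le_iff_coeff_eq_zero]
  intro N hN
  rw [coeff_csum]
  simp [Nat.not_le.mpr hN]

lemma reflect_csum {R : Type*} [CommRing R] (p : ℕ) (c : ℕ → R) (hc : c 0 = 1) :
    Polynomial.reflect p (∑ m ∈ Finset.range (p + 1), Polynomial.C (c m) * Polynomial.X ^ m) =
      Polynomial.X ^ p + ∑ i ∈ Finset.Icc 1 p, Polynomial.C (c i) * Polynomial.X ^ (p - i) := by
  apply Polynomial.ext
  intro n
  rw [Polynomial.coeff_reflect]
  by_cases hn : n ≤ p
  · rw [Polynomial.revAt_le hn, coeff_csum, if_pos (Nat.sub_le _ _), Polynomial.coeff_add,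
      Polynomial.coeff_X_pow, Polynomial.finset_sum_coeff]
    simp only [Polynomial.coeff_C_mul, Polynomial.coeff_X_pow, mul_ite, mul_one, mul_zero]
    rcases eq_or_lt_of_le hn with h | h
    · subst h
      rw [Nat.sub_self, hc, if_pos rfl, Finset.sum_eq_zero, add_zero]
      intro i hi
      simp only [Finset.mem_Icc] at hi
      rw [if_neg (by omega)]
    · rw [if_neg (by omega), zero_add,
        Finset.sum_eq_single_of_mem (p - n) (by simp only [Finset.mem_Icc]; omega)]
      · rw [if_pos (by omega)]
      · intro i hi hne
        simp only [Finset.mem_Icc] at hi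
        rw [if_neg (by omega)]
  · rw [Polynomial.revAt_eq_self_of_lt (Nat.lt_of_not_le hn), coeff_csum, if_neg hn,
      Polynomial.coeff_add, Polynomial.coeff_X_pow, if_neg (by omega),
      Polynomial.finset_sum_coeff, zero_add]
    simp only [Polynomial.coeff_C_mul, Polynomial.coeff_X_pow, mul_ite, mul_one, mul_zero]
    refine (Finset.sum_eq_zero fun i hi => ?_).symm
    simp only [Finset.mem_Icc] at hi
    rw [if_neg (by omega)]

lemma reflect_pow' {R : Type*} [CommRing R] (f : Polynomial R) (N k : ℕ)
    (hf : f.natDegree ≤ N) :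
    Polynomial.reflect (N * k) (f ^ k) = Polynomial.reflect N f ^ k := by
  induction k with
  | zero => simp
  | succ k ih =>
    have hk : (f ^ k).natDegree ≤ N * k :=
      le_trans Polynomial.natDegree_pow_le (by
        calc k * f.natDegree ≤ k * N := Nat.mul_le_mul_left k hf
        _ = N * k := Nat.mul_comm _ _)
    rw [pow_succ, Nat.mul_succ, Polynomial.reflect_mul (f ^ k) f hk hf, ih, pow_succ]

end Spec9
namespace Spec9

variable (p q : ℕ)

/-- The rescaling `e_i ↦ p·e_i`, `f_j ↦ q·f_j` on `P`. -/
noncomputable def phiHom : MvPolynomial (EFVar p q) ℚ →ₐ[ℚ] MvPolynomial (EFVar p q) ℚ :=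
  aeval (Sum.elim (fun i => (p : MvPolynomial (EFVar p q) ℚ) * X (Sum.inl i))
    (fun j => (q : MvPolynomial (EFVar p q) ℚ) * X (Sum.inr j)))

noncomputable def phiInv : MvPolynomial (EFVar p q) ℚ →ₐ[ℚ] MvPolynomial (EFVar p q) ℚ :=
  aeval (Sum.elim (fun i => C ((p : ℚ)⁻¹) * X (Sum.inl i))
    (fun j => C ((q : ℚ)⁻¹) * X (Sum.inr j)))

noncomputable def phiEquiv (hp : 0 < p) (hq : 0 < q) :
    MvPolynomial (EFVar p q) ℚ ≃ₐ[ℚ] MvPolynomial (EFVar p q) ℚ := by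
  have hp' : (p : ℚ) ≠ 0 := Nat.cast_ne_zero.mpr hp.ne'
  have hq' : (q : ℚ) ≠ 0 := Nat.cast_ne_zero.mpr hq.ne'
  have hcast : ∀ n : ℕ, ((n : ℕ) : MvPolynomial (EFVar p q) ℚ) = C ((n : ℕ) : ℚ) :=
    fun n => (map_natCast (C : ℚ →+* MvPolynomial (EFVar p q) ℚ) n).symm
  refine AlgEquiv.ofAlgHom (phiHom p q) (phiInv p q) ?_ ?_
  · apply MvPolynomial.algHom_ext
    rintro (i | j)
    · show phiHom p q (phiInv p q (X (Sum.inl i))) = X (Sum.inl i)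
      rw [phiInv, phiHom]
      simp only [aeval_X, Sum.elim_inl, map_mul, aeval_C, MvPolynomial.algebraMap_eq]
      rw [hcast, ← mul_assoc, ← C_mul, inv_mul_cancel₀ hp', C_1, one_mul]
    · show phiHom p q (phiInv p q (X (Sum.inr j))) = X (Sum.inr j)
      rw [phiInv, phiHom]
      simp only [aeval_X, Sum.elim_inr, map_mul, aeval_C, MvPolynomial.algebraMap_eq]
      rw [hcast, ← mul_assoc, ← C_mul, inv_mul_cancel₀ hq', C_1, one_mul]
  · apply MvPolynomial.algHom_ext
    rintro (i | j)
    · show phiInv p q (phiHom p q (X (Sum.inl i))) = X (Sum.inl i)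
      rw [phiHom, phiInv]
      simp only [aeval_X, Sum.elim_inl, map_mul, map_natCast]
      rw [hcast, ← mul_assoc, ← C_mul, mul_inv_cancel₀ hp', C_1, one_mul]
    · show phiInv p q (phiHom p q (X (Sum.inr j))) = X (Sum.inr j)
      rw [phiHom, phiInv]
      simp only [aeval_X, Sum.elim_inr, map_mul, map_natCast]
      rw [hcast, ← mul_assoc, ← C_mul, mul_inv_cancel₀ hq', C_1, one_mul]

/-- Inclusion `P → S`. -/
noncomputable def iota : MvPolynomial (EFVar p q) ℚ →ₐ[ℚ] MvPolynomial (SVar p q) ℚ :=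
  rename Sum.inr

/-- Evaluation `S → P` at `ε = 1`, `s = 0`. -/
noncomputable def ev : MvPolynomial (SVar p q) ℚ →ₐ[ℚ] MvPolynomial (EFVar p q) ℚ :=
  aeval (Sum.elim (fun i : Fin 2 => if i = 0 then 1 else 0) X)

/-- The double quotient map `S → R̃/(ε-1,s)`. -/
noncomputable def piHom : MvPolynomial (SVar p q) ℚ →ₐ[ℚ] (Rtil p q ⧸ specIdeal p q) :=
  (Ideal.Quotient.mkₐ ℚ (specIdeal p q)).comp (Ideal.Quotient.mkₐ ℚ (IdealF p q))

lemma ev_comp_iota : (ev p q).comp (iota p q) = AlgHom.id ℚ _ := by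
  apply MvPolynomial.algHom_ext
  intro v
  simp [ev, iota, aeval_rename]

lemma piHom_eps : piHom p q (X (Sum.inl 0)) = 1 := by
  show Ideal.Quotient.mk _ (Ideal.Quotient.mk _ _) = 1
  rw [show (1 : Rtil p q ⧸ specIdeal p q) = Ideal.Quotient.mk _ 1 from (map_one _).symm,
    Ideal.Quotient.eq]
  exact Ideal.subset_span (Set.mem_insert _ _)

lemma piHom_s : piHom p q (X (Sum.inl 1)) = 0 := by
  show Ideal.Quotient.mk _ (Ideal.Quotient.mk _ _) = 0
  rw [Ideal.Quotient.eq_zero_iff_mem]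
  exact Ideal.subset_span (Set.mem_insert_of_mem _ rfl)

lemma pi_comp : (piHom p q).comp ((iota p q).comp (ev p q)) = piHom p q := by
  apply MvPolynomial.algHom_ext
  rintro (i | v)
  · simp only [AlgHom.comp_apply]
    fin_cases i
    · show (piHom p q) ((iota p q) ((ev p q) (X (Sum.inl 0)))) = (piHom p q) (X (Sum.inl 0))
      rw [show (ev p q) (X (Sum.inl 0)) = 1 by simp [ev]]
      rw [map_one, map_one, piHom_eps]
    · show (piHom p q) ((iota p q) ((ev p q) (X (Sum.inl 1)))) = (piHom p q) (X (Sum.inl 1))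
      rw [show (ev p q) (X (Sum.inl 1)) = 0 by simp [ev]]
      rw [map_zero, map_zero, piHom_s]
  · simp [ev, iota]

lemma specMap_eq : specMap p q = (piHom p q).comp ((iota p q).comp (phiHom p q)) := by
  apply MvPolynomial.algHom_ext
  rintro (i | j) <;>
    simp [specMap, piHom, iota, phiHom, Ideal.Quotient.mkₐ_eq_mk]

/-! ### The polynomial computations -/

noncomputable def Ecoef : ℕ → MvPolynomial (EFVar p q) ℚ := fun n =>
  if n = 0 then 1 else if h : 2 ≤ n ∧ n ≤ p then X (Sum.inl ⟨n, h⟩) else 0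

noncomputable def Fcoef : ℕ → MvPolynomial (EFVar p q) ℚ := fun n =>
  if n = 0 then 1 else if h : 2 ≤ n ∧ n ≤ q then X (Sum.inr ⟨n, h⟩) else 0

noncomputable def Epoly : Polynomial (MvPolynomial (EFVar p q) ℚ) :=
  ∑ m ∈ Finset.range (p + 1), Polynomial.C (Ecoef p q m) * Polynomial.X ^ m

noncomputable def Fpoly : Polynomial (MvPolynomial (EFVar p q) ℚ) :=
  ∑ m ∈ Finset.range (q + 1), Polynomial.C (Fcoef p q m) * Polynomial.X ^ m

lemma Ecoef_zero : Ecoef p q 0 = 1 := by simp [Ecoef]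

lemma Fcoef_zero : Fcoef p q 0 = 1 := by simp [Fcoef]

lemma Ecoef_high {n : ℕ} (h : ¬ n ≤ p) : Ecoef p q n = 0 := by
  rw [Ecoef, if_neg (by omega), dif_neg (by omega)]

lemma Fcoef_high {n : ℕ} (h : ¬ n ≤ q) : Fcoef p q n = 0 := by
  rw [Fcoef, if_neg (by omega), dif_neg (by omega)]

lemma coe_Epoly : ((Epoly p q : Polynomial _) : PowerSeries (MvPolynomial (EFVar p q) ℚ))
    = Eser p q := by
  apply PowerSeries.ext
  intro n
  rw [Polynomial.coeff_coe, Epoly, coeff_csum, Eser, PowerSeries.coeff_mk]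
  show (if n ≤ p then Ecoef p q n else 0) = Ecoef p q n
  split_ifs with h
  · rfl
  · exact (Ecoef_high p q h).symm

lemma coe_Fpoly : ((Fpoly p q : Polynomial _) : PowerSeries (MvPolynomial (EFVar p q) ℚ))
    = Fser p q := by
  apply PowerSeries.ext
  intro n
  rw [Polynomial.coeff_coe, Fpoly, coeff_csum, Fser, PowerSeries.coeff_mk]
  show (if n ≤ q then Fcoef p q n else 0) = Fcoef p q n
  split_ifs with h
  · rfl
  · exact (Fcoef_high p q h).symm

/-- The generators of `IdealO`. -/
noncomputable def gen (n : ℕ) : MvPolynomial (EFVar p q) ℚ :=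
  PowerSeries.coeff n (Eser p q ^ q - Fser p q ^ p)

lemma IdealO_eq : IdealO p q = Ideal.span (Set.range (gen p q)) := rfl

lemma gen_eq_coeff (n : ℕ) : gen p q n = (Epoly p q ^ q - Fpoly p q ^ p).coeff n := by
  rw [gen, ← coe_Epoly, ← coe_Fpoly, ← Polynomial.coe_pow, ← Polynomial.coe_pow,
    ← Polynomial.coe_sub, Polynomial.coeff_coe]

lemma natDegree_Epoly_le : (Epoly p q).natDegree ≤ p := natDegree_csum_le p _

lemma natDegree_Fpoly_le : (Fpoly p q).natDegree ≤ q := natDegree_csum_le q _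

lemma gen_high {n : ℕ} (h : p * q < n) : gen p q n = 0 := by
  rw [gen_eq_coeff]
  apply Polynomial.coeff_eq_zero_of_natDegree_lt
  apply lt_of_le_of_lt _ h
  apply le_trans (Polynomial.natDegree_sub_le _ _)
  apply max_le
  · refine le_trans Polynomial.natDegree_pow_le ?_
    rw [Nat.mul_comm p q]
    exact Nat.mul_le_mul (le_refl q) (natDegree_Epoly_le p q)
  · exact le_trans Polynomial.natDegree_pow_le
      (Nat.mul_le_mul (le_refl p) (natDegree_Fpoly_le p q))

lemma ev_coefA {i : ℕ} (hi : 1 ≤ i) :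
    ev p q ((p : MvPolynomial (SVar p q) ℚ) * X (Sum.inl 0) * eS p q i)
      = phiHom p q (Ecoef p q i) := by
  by_cases h1 : i = 1
  · subst h1
    simp [ev, eS, Ecoef]
  · by_cases h2 : 2 ≤ i ∧ i ≤ p
    · rw [eS, if_neg h1, dif_pos h2, Ecoef, if_neg (by omega), dif_pos h2]
      simp [ev, phiHom]
    · rw [eS, if_neg h1, dif_neg h2, Ecoef, if_neg (by omega), dif_neg h2]
      simp

lemma ev_coefB {j : ℕ} (hj : 1 ≤ j) :
    ev p q ((q : MvPolynomial (SVar p q) ℚ) * X (Sum.inl 0) * fS p q j)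
      = phiHom p q (Fcoef p q j) := by
  by_cases h1 : j = 1
  · subst h1
    simp [ev, fS, Fcoef]
  · by_cases h2 : 2 ≤ j ∧ j ≤ q
    · rw [fS, if_neg h1, dif_pos h2, Fcoef, if_neg (by omega), dif_pos h2]
      simp [ev, phiHom]
    · rw [fS, if_neg h1, dif_neg h2, Fcoef, if_neg (by omega), dif_neg h2]
      simp

lemma map_Epoly : (Epoly p q).map (phiHom p q).toRingHom =
    ∑ m ∈ Finset.range (p + 1), Polynomial.C (phiHom p q (Ecoef p q m)) * Polynomial.X ^ m := by
  rw [Epoly, Polynomial.map_sum]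
  exact Finset.sum_congr rfl fun m _ => by
    rw [Polynomial.map_mul, Polynomial.map_C, Polynomial.map_pow, Polynomial.map_X]; rfl

lemma map_Fpoly : (Fpoly p q).map (phiHom p q).toRingHom =
    ∑ m ∈ Finset.range (q + 1), Polynomial.C (phiHom p q (Fcoef p q m)) * Polynomial.X ^ m := by
  rw [Fpoly, Polynomial.map_sum]
  exact Finset.sum_congr rfl fun m _ => by
    rw [Polynomial.map_mul, Polynomial.map_C, Polynomial.map_pow, Polynomial.map_X]; rfl

lemma map_Apoly : (Apoly p q).map (ev p q).toRingHom =
    Polynomial.reflect p ((Epoly p q).map (phiHom p q).toRingHom) := by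
  rw [map_Epoly, reflect_csum p _ (by rw [Ecoef_zero, map_one]), Apoly, Polynomial.map_add,
    Polynomial.map_pow, Polynomial.map_X, Polynomial.map_sum]
  congr 1
  refine Finset.sum_congr rfl fun i hi => ?_
  rw [Polynomial.map_mul, Polynomial.map_C, Polynomial.map_pow, Polynomial.map_X]
  simp only [Finset.mem_Icc] at hi
  rw [show ((ev p q).toRingHom : MvPolynomial (SVar p q) ℚ → _) = ⇑(ev p q) from rfl]
  rw [ev_coefA p q hi.1]

lemma map_Bpoly : (Bpoly p q).map (ev p q).toRingHom =
    Polynomial.reflect q ((Fpoly p q).map (phiHom p q).toRingHom) := by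
  rw [map_Fpoly, reflect_csum q _ (by rw [Fcoef_zero, map_one]), Bpoly, Polynomial.map_add,
    Polynomial.map_pow, Polynomial.map_X, Polynomial.map_sum]
  congr 1
  refine Finset.sum_congr rfl fun j hj => ?_
  rw [Polynomial.map_mul, Polynomial.map_C, Polynomial.map_pow, Polynomial.map_X]
  simp only [Finset.mem_Icc] at hj
  rw [show ((ev p q).toRingHom : MvPolynomial (SVar p q) ℚ → _) = ⇑(ev p q) from rfl]
  rw [ev_coefB p q hj.1]

lemma map_ABdiff : (ABdiff p q).map (ev p q).toRingHom =
    Polynomial.reflect (p * q) ((Epoly p q).map (phiHom p q).toRingHom ^ q) -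
      Polynomial.reflect (p * q) ((Fpoly p q).map (phiHom p q).toRingHom ^ p) := by
  have hE : ((Epoly p q).map (phiHom p q).toRingHom).natDegree ≤ p :=
    le_trans Polynomial.natDegree_map_le (natDegree_Epoly_le p q)
  have hF : ((Fpoly p q).map (phiHom p q).toRingHom).natDegree ≤ q :=
    le_trans Polynomial.natDegree_map_le (natDegree_Fpoly_le p q)
  rw [ABdiff, Polynomial.map_sub, Polynomial.map_prod, Polynomial.map_prod]
  have hc : ∀ (k : ℕ),
      ev p q (((k : ℕ) : MvPolynomial (SVar p q) ℚ) * X (Sum.inl 1) * X (Sum.inl 0)) = 0 := by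
    intro k
    simp [ev]
  have hA : ∀ j ∈ Finset.range q,
      ((Apoly p q).comp (Polynomial.X + Polynomial.C
          (((j * p : ℕ) : MvPolynomial (SVar p q) ℚ) * X (Sum.inl 1) * X (Sum.inl 0)))).map
        (ev p q).toRingHom
      = Polynomial.reflect p ((Epoly p q).map (phiHom p q).toRingHom) := by
    intro j _
    rw [Polynomial.map_comp, Polynomial.map_add, Polynomial.map_X, Polynomial.map_C]
    rw [show ((ev p q).toRingHom : MvPolynomial (SVar p q) ℚ → _) = ⇑(ev p q) from rfl, hc,
      Polynomial.C_0, add_zero, Polynomial.comp_X, map_Apoly]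
  have hB : ∀ i ∈ Finset.range p,
      ((Bpoly p q).comp (Polynomial.X + Polynomial.C
          (((i * q : ℕ) : MvPolynomial (SVar p q) ℚ) * X (Sum.inl 1) * X (Sum.inl 0)))).map
        (ev p q).toRingHom
      = Polynomial.reflect q ((Fpoly p q).map (phiHom p q).toRingHom) := by
    intro i _
    rw [Polynomial.map_comp, Polynomial.map_add, Polynomial.map_X, Polynomial.map_C]
    rw [show ((ev p q).toRingHom : MvPolynomial (SVar p q) ℚ → _) = ⇑(ev p q) from rfl, hc,
      Polynomial.C_0, add_zero, Polynomial.comp_X, map_Bpoly]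
  rw [Finset.prod_congr rfl hA, Finset.prod_congr rfl hB, Finset.prod_const, Finset.prod_const,
    Finset.card_range, Finset.card_range, ← reflect_pow' _ p q hE, ← reflect_pow' _ q p hF,
    Nat.mul_comm q p]

lemma ev_coeff_ABdiff {d : ℕ} (hd : d ≤ p * q) :
    ev p q ((ABdiff p q).coeff d) = phiHom p q (gen p q (p * q - d)) := by
  have h1 : ev p q ((ABdiff p q).coeff d) = ((ABdiff p q).map (ev p q).toRingHom).coeff d := by
    rw [Polynomial.coeff_map]; rfl
  rw [h1, map_ABdiff, Polynomial.coeff_sub, Polynomial.coeff_reflect, Polynomial.coeff_reflect,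
    Polynomial.revAt_le hd, gen_eq_coeff]
  have h2 : phiHom p q ((Epoly p q ^ q - Fpoly p q ^ p).coeff (p * q - d)) =
      ((Epoly p q ^ q - Fpoly p q ^ p).map (phiHom p q).toRingHom).coeff (p * q - d) := by
    rw [Polynomial.coeff_map]; rfl
  rw [h2, Polynomial.map_sub, Polynomial.map_pow, Polynomial.map_pow, Polynomial.coeff_sub]

lemma map_IdealF_eq :
    Ideal.map (ev p q).toRingHom (IdealF p q)
      = Ideal.map (phiHom p q).toRingHom (IdealO p q) := by
  rw [IdealF, IdealO_eq, Ideal.map_span, Ideal.map_span]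
  apply le_antisymm <;> rw [Ideal.span_le] <;> rintro x hx
  · obtain ⟨y, ⟨d, hd, rfl⟩, rfl⟩ := hx
    rw [show ((ev p q).toRingHom : MvPolynomial (SVar p q) ℚ → _) = ⇑(ev p q) from rfl,
      ev_coeff_ABdiff p q hd]
    exact Ideal.subset_span ⟨gen p q (p * q - d), ⟨p * q - d, rfl⟩, rfl⟩
  · obtain ⟨y, ⟨n, rfl⟩, rfl⟩ := hx
    by_cases hn : n ≤ p * q
    · have h : ev p q ((ABdiff p q).coeff (p * q - n)) = phiHom p q (gen p q n) := by
        rw [ev_coeff_ABdiff p q (Nat.sub_le _ _), Nat.sub_sub_self hn]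
      show (phiHom p q) (gen p q n) ∈ _
      rw [← h]
      exact Ideal.subset_span ⟨(ABdiff p q).coeff (p * q - n),
        ⟨p * q - n, Nat.sub_le _ _, rfl⟩, rfl⟩
    · show (phiHom p q) (gen p q n) ∈ _
      rw [gen_high p q (by omega), map_zero]
      exact SetLike.mem_coe.mpr (Ideal.zero_mem _)

/-! ### Kernel computations -/

noncomputable def Tideal : Ideal (MvPolynomial (SVar p q) ℚ) :=
  Ideal.span {X (Sum.inl 0) - 1, X (Sum.inl 1)}

lemma specIdeal_eq :
    specIdeal p q = Ideal.map (Ideal.Quotient.mk (IdealF p q)) (Tideal p q) := by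
  rw [Tideal, Ideal.map_span, Set.image_pair, specIdeal]
  have h1 : Ideal.Quotient.mk (IdealF p q) (X (Sum.inl 0) - 1) = εcls p q - 1 := by
    rw [map_sub, map_one]; rfl
  have h2 : Ideal.Quotient.mk (IdealF p q) (X (Sum.inl 1)) = scls p q := rfl
  rw [h1, h2]

lemma ker_pi : RingHom.ker (piHom p q) = Tideal p q ⊔ IdealF p q := by
  have h : RingHom.ker (piHom p q)
      = Ideal.comap (Ideal.Quotient.mk (IdealF p q)) (specIdeal p q) := by
    ext x
    rw [RingHom.mem_ker, Ideal.mem_comap, ← Ideal.Quotient.eq_zero_iff_mem]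
    exact Iff.rfl
  rw [h, specIdeal_eq, Ideal.comap_map_of_surjective _ Ideal.Quotient.mk_surjective,
    show Ideal.comap (Ideal.Quotient.mk (IdealF p q)) ⊥ = IdealF p q from Ideal.mk_ker]

lemma ev_Tideal : Ideal.map (ev p q).toRingHom (Tideal p q) = ⊥ := by
  rw [Tideal, Ideal.map_span, Set.image_pair]
  have h1 : (ev p q).toRingHom (X (Sum.inl 0) - 1) = 0 := by
    rw [show ((ev p q).toRingHom : MvPolynomial (SVar p q) ℚ → _) = ⇑(ev p q) from rfl]
    simp [ev]
  have h2 : (ev p q).toRingHom (X (Sum.inl 1)) = 0 := by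
    rw [show ((ev p q).toRingHom : MvPolynomial (SVar p q) ℚ → _) = ⇑(ev p q) from rfl]
    simp [ev]
  rw [h1, h2]
  simp

lemma ker_piiota :
    RingHom.ker ((piHom p q).toRingHom.comp (iota p q).toRingHom)
      = Ideal.map (ev p q).toRingHom (Tideal p q ⊔ IdealF p q) := by
  apply le_antisymm
  · intro x hx
    have hx' : iota p q x ∈ RingHom.ker (piHom p q) := hx
    rw [ker_pi] at hx'
    have hxx : x = ev p q (iota p q x) := (AlgHom.congr_fun (ev_comp_iota p q) x).symm
    rw [hxx]
    exact Ideal.mem_map_of_mem _ hx'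
  · rw [Ideal.map_le_iff_le_comap]
    intro y hy
    have hcomp : piHom p q ((iota p q) ((ev p q) y)) = piHom p q y :=
      AlgHom.congr_fun (pi_comp p q) y
    have hy0 : piHom p q y = 0 := by
      have hk : y ∈ RingHom.ker (piHom p q) := by rw [ker_pi]; exact hy
      exact hk
    rw [Ideal.mem_comap, RingHom.mem_ker]
    show piHom p q ((iota p q) ((ev p q) y)) = 0
    rw [hcomp, hy0]

end Spec9

theorem specialization_eps_one_s_zero (p q : ℕ) (hp : 0 < p) (hq : 0 < q)
    (hpq : Nat.Coprime p q) :
    RingHom.ker (specMap p q) = IdealO p q ∧ Function.Surjective (specMap p q) := by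
  constructor
  · have hker : RingHom.ker (specMap p q)
        = Ideal.comap (Spec9.phiHom p q).toRingHom
            (RingHom.ker ((Spec9.piHom p q).toRingHom.comp (Spec9.iota p q).toRingHom)) := by
      ext x
      simp only [RingHom.mem_ker, Ideal.mem_comap, Spec9.specMap_eq p q]
      exact Iff.rfl
    rw [hker, Spec9.ker_piiota, Ideal.map_sup, Spec9.ev_Tideal, bot_sup_eq,
      Spec9.map_IdealF_eq]
    exact Ideal.comap_map_of_bijective _ (Spec9.phiEquiv p q hp hq).bijective
  · have hsurj : Function.Surjective (Spec9.piHom p q) := by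
      intro z
      obtain ⟨a, ha⟩ := Ideal.Quotient.mk_surjective z
      obtain ⟨b, hb⟩ := Ideal.Quotient.mk_surjective a
      refine ⟨b, ?_⟩
      rw [Spec9.piHom, AlgHom.comp_apply, Ideal.Quotient.mkₐ_eq_mk,
        Ideal.Quotient.mkₐ_eq_mk, hb, ha]
    intro y
    obtain ⟨x, hx⟩ := hsurj y
    refine ⟨(Spec9.phiEquiv p q hp hq).symm (Spec9.ev p q x), ?_⟩
    have h1 : specMap p q ((Spec9.phiEquiv p q hp hq).symm (Spec9.ev p q x))
        = Spec9.piHom p q ((Spec9.iota p q) ((Spec9.phiHom p q)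
            ((Spec9.phiEquiv p q hp hq).symm (Spec9.ev p q x)))) := by
      rw [Spec9.specMap_eq]
      rfl
    have h2 : (Spec9.phiHom p q) ((Spec9.phiEquiv p q hp hq).symm (Spec9.ev p q x))
        = Spec9.ev p q x := (Spec9.phiEquiv p q hp hq).apply_symm_apply _
    rw [h1, h2]
    have h3 : Spec9.piHom p q ((Spec9.iota p q) ((Spec9.ev p q) x)) = Spec9.piHom p q x :=
      AlgHom.congr_fun (Spec9.pi_comp p q) x
    rw [h3, hx]
end

section
/- Let σ ∈ Σ_{q/p}. For each 0 ≤ i ≤ p−1 the set of elements of σ congruent to i modulo p is nonempty and bounded below; let a_i be its smallest element (the p-basis of σ). Similarly, for each 0 ≤ j ≤ q−1 let b_j be the smallest element of σ congruent to j modulo q (the q-basis of σ). Then Σ_{i=0}^{p−1} a_i = pq(p−1)/2 and Σ_{j=0}^{q−1} b_j = pq(q−1)/2. -/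
/-!
Statement 13.  Let `p, q` be coprime positive integers, `Γ = ℕp + ℕq ⊆ ℤ`,
and let `σ ⊆ ℤ` be a nonempty `Γ`-module with `σ∖Γ` and `Γ∖σ` finite of the
same cardinality.  Then each congruence class of `σ` modulo `p` (resp. `q`)
is nonempty and bounded below — it has a least element — and, denoting by
`a_i` (resp. `b_j`) these least elements (the `p`-basis resp. `q`-basis of
`σ`), one has `Σ_{i<p} a_i = pq(p−1)/2` and `Σ_{j<q} b_j = pq(q−1)/2`.
-/

/-- The numerical semigroup `Γ = {ap + bq : a, b ∈ ℕ} ⊆ ℤ`. -/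
def Gam (p q : ℕ) : Set ℤ := {n : ℤ | ∃ a b : ℕ, n = a * p + b * q}

lemma Gam_comm (p q : ℕ) : Gam p q = Gam q p := by
  ext n
  constructor <;> rintro ⟨a, b, rfl⟩ <;> exact ⟨b, a, by ring⟩

lemma Gam_nonneg {p q : ℕ} {x : ℤ} (hx : x ∈ Gam p q) : 0 ≤ x := by
  obtain ⟨a, b, rfl⟩ := hx; positivity

lemma stab_iterate {σ : Set ℤ} {q : ℕ} (hstab : ∀ x ∈ σ, x + q ∈ σ) :
    ∀ (k : ℕ), ∀ x ∈ σ, x + k * q ∈ σ := by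
  intro k
  induction k with
  | zero => intro x hx; simpa using hx
  | succ n ih =>
      intro x hx
      have h1 := hstab _ (ih x hx)
      have h2 : x + (n : ℤ) * q + q = x + ((n + 1 : ℕ) : ℤ) * q := by push_cast; ring
      rwa [h2] at h1

lemma mem_of_le_of_emod {σ : Set ℤ} {p : ℕ} (hp : 0 < p)
    (hstab : ∀ x ∈ σ, x + p ∈ σ) {a x : ℤ} (ha : a ∈ σ) (hle : a ≤ x)
    (hmod : x % (p : ℤ) = a % (p : ℤ)) : x ∈ σ := by
  have hdvd : (p : ℤ) ∣ x - a := Int.ModEq.dvd (show Int.ModEq (p : ℤ) a x from hmod.symm)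
  obtain ⟨m, hm⟩ := hdvd
  have hp' : (0 : ℤ) < p := by exact_mod_cast hp
  have hm0 : 0 ≤ m := by nlinarith
  have hx : x = a + m.toNat * p := by
    rw [Int.toNat_of_nonneg hm0]; linarith
  rw [hx]
  exact stab_iterate hstab m.toNat a ha

/-- Every residue class mod `p` of `σ` has a least element. -/
lemma least_exists (p q : ℕ) (hp : 0 < p)
    (hcop : IsCoprime (q : ℤ) (p : ℤ)) (σ : Set ℤ)
    (hne : σ.Nonempty) (hstabq : ∀ x ∈ σ, x + q ∈ σ)
    (hbdd : ∃ B : ℤ, ∀ x ∈ σ, B ≤ x) (i : ℕ) (hi : i < p) :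
    ∃ m : ℤ, IsLeast {x : ℤ | x ∈ σ ∧ x % (p : ℤ) = (i : ℤ)} m := by
  classical
  obtain ⟨x₀, hx₀⟩ := hne
  obtain ⟨u, v, huv⟩ := hcop
  have hp' : (0 : ℤ) < p := by exact_mod_cast hp
  have hpne : (p : ℤ) ≠ 0 := ne_of_gt hp'
  set k' : ℤ := ((i : ℤ) - x₀) * u with hk'
  set k : ℕ := (k' % p).toNat with hkdef
  have hk : (k : ℤ) = k' % p := Int.toNat_of_nonneg (Int.emod_nonneg _ hpne)
  have hmem : x₀ + k * q ∈ σ := stab_iterate hstabq k x₀ hx₀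
  have h1 : Int.ModEq (p : ℤ) (k : ℤ) k' := by
    rw [hk]; exact Int.emod_emod_of_dvd k' dvd_rfl
  have h2 : Int.ModEq (p : ℤ) (x₀ + (k : ℤ) * q) (x₀ + k' * q) :=
    Int.ModEq.add_left x₀ (h1.mul_right q)
  have h3 : Int.ModEq (p : ℤ) (x₀ + k' * q) (i : ℤ) := by
    rw [Int.modEq_iff_dvd]
    exact ⟨((i : ℤ) - x₀) * v, by rw [hk']; linear_combination (x₀ - (i : ℤ)) * huv⟩
  have hmod : (x₀ + (k : ℤ) * q) % p = (i : ℤ) := by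
    have h4 : (x₀ + (k : ℤ) * q) % p = (i : ℤ) % p := h2.trans h3
    rw [h4, Int.emod_eq_of_lt (by positivity) (by exact_mod_cast hi)]
  obtain ⟨B, hB⟩ := hbdd
  obtain ⟨lb, hlb1, hlb2⟩ := Int.exists_least_of_bdd
    (P := fun z => z ∈ σ ∧ z % (p : ℤ) = (i : ℤ))
    ⟨B, fun z hz => hB z hz.1⟩ ⟨x₀ + k * q, hmem, hmod⟩
  exact ⟨lb, hlb1, fun z hz => hlb2 z hz⟩

lemma sigma_bddBelow {p q : ℕ} {σ : Set ℤ} (hfin₁ : (σ \ Gam p q).Finite) :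
    ∃ B : ℤ, ∀ x ∈ σ, B ≤ x := by
  obtain ⟨B, hB⟩ := hfin₁.bddBelow
  refine ⟨min B 0, fun x hx => ?_⟩
  by_cases hxΓ : x ∈ Gam p q
  · exact le_trans (min_le_right _ _) (Gam_nonneg hxΓ)
  · exact le_trans (min_le_left _ _) (hB ⟨hx, hxΓ⟩)

lemma ncard_Ico_class {p : ℕ} (hp : 0 < p) {a b : ℤ} (hdvd : (p : ℤ) ∣ b - a) :
    {x : ℤ | (a ≤ x ∧ x < b) ∧ x % (p : ℤ) = a % (p : ℤ)}.ncard = ((b - a) / p).toNat := by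
  classical
  obtain ⟨m, hm⟩ := hdvd
  have hp' : (0 : ℤ) < p := by exact_mod_cast hp
  have hpne : (p : ℤ) ≠ 0 := ne_of_gt hp'
  have hdiv : (b - a) / p = m := by rw [hm, Int.mul_ediv_cancel_left _ hpne]
  rw [hdiv]
  have hset : {x : ℤ | (a ≤ x ∧ x < b) ∧ x % (p : ℤ) = a % (p : ℤ)} =
      ↑((Finset.range m.toNat).image fun k : ℕ => a + k * p) := by
    ext x
    simp only [Set.mem_setOf_eq, Finset.coe_image, Set.mem_image, Finset.mem_coe,
      Finset.mem_range]
    constructor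
    · rintro ⟨⟨h1, h2⟩, h3⟩
      have hd : (p : ℤ) ∣ x - a := Int.ModEq.dvd (show Int.ModEq (p : ℤ) a x from h3.symm)
      obtain ⟨kk, hkk⟩ := hd
      have hk0 : 0 ≤ kk := by nlinarith
      have hxb : (p : ℤ) * kk < p * m := by
        have : x - a < b - a := by linarith
        rw [← hkk, ← hm] at *; linarith
      have hkm : kk < m := lt_of_mul_lt_mul_left hxb (le_of_lt hp')
      exact ⟨kk.toNat, by omega, by rw [Int.toNat_of_nonneg hk0]; linarith⟩
    · rintro ⟨kk, hkm, rfl⟩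
      have hk' : (kk : ℤ) < m := by omega
      have hkp : (kk : ℤ) * p < m * p := by
        exact mul_lt_mul_of_pos_right hk' hp'
      refine ⟨⟨le_add_of_nonneg_right (by positivity), by nlinarith⟩, ?_⟩
      simp [Int.add_mul_emod_self_right]
  rw [hset, Set.ncard_coe_finset]
  rw [Finset.card_image_of_injective _ ?_, Finset.card_range]
  intro k1 k2 h
  have h' : a + (k1 : ℤ) * p = a + (k2 : ℤ) * p := h
  have h1 : (k1 : ℤ) * p = (k2 : ℤ) * p := by linarith
  exact_mod_cast mul_right_cancel₀ hpne h1

lemma diff_class_eq {p : ℕ} (hp : 0 < p) {A B : Set ℤ}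
    (hAstab : ∀ x ∈ A, x + p ∈ A) (hBstab : ∀ x ∈ B, x + p ∈ B) {i a b : ℤ}
    (ha : IsLeast {x : ℤ | x ∈ A ∧ x % (p : ℤ) = i} a)
    (hb : IsLeast {x : ℤ | x ∈ B ∧ x % (p : ℤ) = i} b) :
    {x : ℤ | x ∈ A \ B ∧ x % (p : ℤ) = i} =
      {x : ℤ | (a ≤ x ∧ x < b) ∧ x % (p : ℤ) = a % (p : ℤ)} := by
  have hai : a % (p : ℤ) = i := ha.1.2
  have hbi : b % (p : ℤ) = i := hb.1.2
  ext x
  simp only [Set.mem_setOf_eq, Set.mem_diff]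
  constructor
  · rintro ⟨⟨hxA, hxB⟩, hxi⟩
    refine ⟨⟨ha.2 ⟨hxA, hxi⟩, ?_⟩, by rw [hai, hxi]⟩
    by_contra h
    push_neg at h
    exact hxB (mem_of_le_of_emod hp hBstab hb.1.1 h (by rw [hxi, hbi]))
  · rintro ⟨⟨h1, h2⟩, h3⟩
    have hxi : x % (p : ℤ) = i := by rw [h3, hai]
    refine ⟨⟨mem_of_le_of_emod hp hAstab ha.1.1 h1 (by rw [hxi, hai]), fun hxB => ?_⟩, hxi⟩
    have := hb.2 ⟨hxB, hxi⟩
    omega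

lemma class_count {p : ℕ} (hp : 0 < p) {A B : Set ℤ}
    (hAstab : ∀ x ∈ A, x + p ∈ A) (hBstab : ∀ x ∈ B, x + p ∈ B) {i a b : ℤ}
    (ha : IsLeast {x : ℤ | x ∈ A ∧ x % (p : ℤ) = i} a)
    (hb : IsLeast {x : ℤ | x ∈ B ∧ x % (p : ℤ) = i} b) :
    b - a = (p : ℤ) * (({x : ℤ | x ∈ A \ B ∧ x % (p : ℤ) = i}.ncard : ℤ)
      - ({x : ℤ | x ∈ B \ A ∧ x % (p : ℤ) = i}.ncard : ℤ)) := by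
  have hp' : (0 : ℤ) < p := by exact_mod_cast hp
  have hpne : (p : ℤ) ≠ 0 := ne_of_gt hp'
  have hdvd : (p : ℤ) ∣ b - a := by
    have : Int.ModEq (p : ℤ) a b := ha.1.2.trans hb.1.2.symm
    exact this.dvd
  have hdvd' : (p : ℤ) ∣ a - b := by
    rw [show a - b = -(b - a) by ring]; exact hdvd.neg_right
  rw [diff_class_eq hp hAstab hBstab ha hb, diff_class_eq hp hBstab hAstab hb ha,
    ncard_Ico_class hp hdvd, ncard_Ico_class hp hdvd']
  obtain ⟨m, hm⟩ := hdvd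
  have h1 : (b - a) / p = m := by rw [hm, Int.mul_ediv_cancel_left _ hpne]
  have h2 : (a - b) / p = -m := by
    rw [show a - b = (p : ℤ) * (-m) by linear_combination -hm, Int.mul_ediv_cancel_left _ hpne]
  rw [h1, h2]
  have h3 : ((m.toNat : ℤ)) - (((-m).toNat : ℤ)) = m := by omega
  rw [h3, ← hm]

lemma fiber_sum {p : ℕ} (hp : 0 < p) {S : Set ℤ} (hS : S.Finite) :
    ∑ i ∈ Finset.range p, {x : ℤ | x ∈ S ∧ x % (p : ℤ) = (i : ℤ)}.ncard = S.ncard := by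
  classical
  have hp' : (0 : ℤ) < p := by exact_mod_cast hp
  have hpne : (p : ℤ) ≠ 0 := ne_of_gt hp'
  have h1 : ∀ i : ℕ, {x : ℤ | x ∈ S ∧ x % (p : ℤ) = (i : ℤ)} =
      ↑(hS.toFinset.filter fun x => (x % (p : ℤ)).toNat = i) := by
    intro i
    ext x
    simp only [Set.mem_setOf_eq, Finset.coe_filter, Set.Finite.mem_toFinset]
    have h0 := Int.emod_nonneg x hpne
    constructor
    · rintro ⟨h, h2⟩; exact ⟨h, by omega⟩
    · rintro ⟨h, h2⟩; exact ⟨h, by omega⟩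
  simp_rw [h1, Set.ncard_coe_finset]
  rw [← Finset.card_eq_sum_card_fiberwise (f := fun x : ℤ => (x % (p : ℤ)).toNat)
    (t := Finset.range p)]
  · rw [Set.ncard_eq_toFinset_card S hS]
  · intro x hx
    have h0 := Int.emod_nonneg x hpne
    have h2 := Int.emod_lt_of_pos x hp'
    simp only [Finset.coe_range, Set.mem_Iio, Finset.mem_range]
    omega

/-- For `c < p`, `q*c` is the least element of `Γ` in its class mod `p`. -/
lemma gam_least (p q : ℕ) (hp : 0 < p) (hpq : Nat.Coprime p q) (c : ℕ) (hc : c < p) :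
    IsLeast {x : ℤ | x ∈ Gam p q ∧ x % (p : ℤ) = ((q : ℤ) * c) % p} ((q : ℤ) * c) := by
  have hp' : (0 : ℤ) < p := by exact_mod_cast hp
  have hcop : IsCoprime (p : ℤ) (q : ℤ) := Nat.isCoprime_iff_coprime.mpr hpq
  constructor
  · exact ⟨⟨0, c, by push_cast; ring⟩, rfl⟩
  · rintro x ⟨⟨u, v, rfl⟩, hxmod⟩
    have hdvd : (p : ℤ) ∣ (q : ℤ) * c - ((u : ℤ) * p + (v : ℤ) * q) := by
      have : Int.ModEq (p : ℤ) ((u : ℤ) * p + (v : ℤ) * q) ((q : ℤ) * c) := hxmod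
      exact this.dvd
    have hdvd2 : (p : ℤ) ∣ (q : ℤ) * ((c : ℤ) - v) := by
      obtain ⟨w, hw⟩ := hdvd
      exact ⟨w + u, by linarith⟩
    have hdvd3 : (p : ℤ) ∣ ((c : ℤ) - v) := hcop.dvd_of_dvd_mul_left hdvd2
    have hcv : (c : ℤ) ≤ v := by
      by_contra h
      push_neg at h
      have h1 : 0 < (c : ℤ) - v := by linarith
      have h2 := Int.le_of_dvd h1 hdvd3
      have h3 : (0 : ℤ) ≤ v := by positivity
      have h4 : (c : ℤ) < p := by exact_mod_cast hc
      omega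
    have h5 : (0 : ℤ) ≤ (u : ℤ) * p := by positivity
    have h6 : (q : ℤ) * c ≤ (q : ℤ) * v := by
      apply mul_le_mul_of_nonneg_left hcv (by positivity)
    linarith

lemma main_p (p q : ℕ) (hp : 0 < p) (hq : 0 < q) (hpq : Nat.Coprime p q)
    (σ : Set ℤ) (hstabp : ∀ x ∈ σ, x + p ∈ σ)
    (hfin₁ : (σ \ Gam p q).Finite) (hfin₂ : (Gam p q \ σ).Finite)
    (hcard : (σ \ Gam p q).ncard = (Gam p q \ σ).ncard)
    (a : ℕ → ℤ)
    (ha : ∀ i : ℕ, i < p → IsLeast {x : ℤ | x ∈ σ ∧ x % (p : ℤ) = (i : ℤ)} (a i)) :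
    2 * ∑ i ∈ Finset.range p, a i = (p : ℤ) * (q : ℤ) * ((p : ℤ) - 1) := by
  classical
  have hp' : (0 : ℤ) < p := by exact_mod_cast hp
  have hΓstab : ∀ x ∈ Gam p q, x + p ∈ Gam p q := by
    rintro x ⟨u, v, rfl⟩; exact ⟨u + 1, v, by push_cast; ring⟩
  set e : ℕ → ℕ := fun c => (q * c) % p with he
  have heLt : ∀ c, e c < p := fun c => Nat.mod_lt _ hp
  have heCast : ∀ c : ℕ, ((e c : ℕ) : ℤ) = ((q : ℤ) * c) % p := by
    intro c
    simp only [he]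
    push_cast
    ring_nf

  -- reindexing along the bijection `e` of `range p`
  have hinj : ∀ c₁ ∈ Finset.range p, ∀ c₂ ∈ Finset.range p, e c₁ = e c₂ → c₁ = c₂ := by
    intro c₁ h₁ c₂ h₂ hcc
    have h' : Nat.ModEq p (q * c₁) (q * c₂) := hcc
    have h'' := Nat.ModEq.cancel_left_of_coprime (c := q) hpq h'
    have hm1 : c₁ % p = c₁ := Nat.mod_eq_of_lt (Finset.mem_range.mp h₁)
    have hm2 : c₂ % p = c₂ := Nat.mod_eq_of_lt (Finset.mem_range.mp h₂)
    unfold Nat.ModEq at h''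
    omega
  have hreix : ∀ f : ℕ → ℤ, ∑ c ∈ Finset.range p, f (e c) = ∑ i ∈ Finset.range p, f i := by
    intro f
    apply Finset.sum_bij (fun c _ => e c)
    · intro c hc; exact Finset.mem_range.mpr (heLt c)
    · intro c₁ h₁ c₂ h₂ hcc; exact hinj c₁ h₁ c₂ h₂ hcc
    · intro i hi
      obtain ⟨c, hc, hec⟩ := Finset.surj_on_of_inj_on_of_card_le (fun c _ => e c)
        (fun c _ => Finset.mem_range.mpr (heLt c))
        (fun c₁ c₂ h₁ h₂ h => hinj c₁ h₁ c₂ h₂ h) le_rfl i hi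
      exact ⟨c, hc, hec.symm⟩
    · intro c hc; rfl
  -- per-class counting
  have hkey : ∀ c ∈ Finset.range p,
      (q : ℤ) * c - a (e c) =
        (p : ℤ) * (({x : ℤ | x ∈ σ \ Gam p q ∧ x % (p : ℤ) = ((e c : ℕ) : ℤ)}.ncard : ℤ)
          - ({x : ℤ | x ∈ Gam p q \ σ ∧ x % (p : ℤ) = ((e c : ℕ) : ℤ)}.ncard : ℤ)) := by
    intro c hc
    have hgl := gam_least p q hp hpq c (Finset.mem_range.mp hc)
    rw [← heCast c] at hgl
    exact class_count hp hstabp hΓstab (ha (e c) (heLt c)) hgl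
  have hsum1 : ∑ c ∈ Finset.range p, ((q : ℤ) * c - a (e c)) =
      (p : ℤ) * (((σ \ Gam p q).ncard : ℤ) - ((Gam p q \ σ).ncard : ℤ)) := by
    rw [Finset.sum_congr rfl hkey, ← Finset.mul_sum]
    congr 1
    rw [Finset.sum_sub_distrib]
    have hfS := fiber_sum hp hfin₁
    have hfT := fiber_sum hp hfin₂
    congr 1
    · rw [hreix (fun i => ({x : ℤ | x ∈ σ \ Gam p q ∧ x % (p : ℤ) = (i : ℤ)}.ncard : ℤ))]
      exact_mod_cast congrArg (Nat.cast : ℕ → ℤ) hfS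
    · rw [hreix (fun i => ({x : ℤ | x ∈ Gam p q \ σ ∧ x % (p : ℤ) = (i : ℤ)}.ncard : ℤ))]
      exact_mod_cast congrArg (Nat.cast : ℕ → ℤ) hfT
  have hzero : ∑ c ∈ Finset.range p, ((q : ℤ) * c - a (e c)) = 0 := by
    rw [hsum1, hcard]; ring
  have hsum2 : ∑ c ∈ Finset.range p, a (e c) = ∑ i ∈ Finset.range p, a i := hreix a
  rw [Finset.sum_sub_distrib, hsum2] at hzero
  have hA : ∑ i ∈ Finset.range p, a i = (q : ℤ) * ∑ c ∈ Finset.range p, (c : ℤ) := by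
    rw [← Finset.mul_sum] at hzero
    linarith
  have hGauss : 2 * ∑ c ∈ Finset.range p, (c : ℤ) = (p : ℤ) * ((p : ℤ) - 1) := by
    have h := Finset.sum_range_id_mul_two p
    have h2 : ((∑ i ∈ Finset.range p, i) * 2 : ℕ) = (p * (p - 1) : ℕ) := h
    have h3 : (((∑ i ∈ Finset.range p, i) * 2 : ℕ) : ℤ) = (((p * (p - 1) : ℕ)) : ℤ) := by
      exact_mod_cast h2
    push_cast [Nat.cast_sub hp] at h3
    linarith
  rw [hA]
  linear_combination (q : ℤ) * hGauss

theorem p_basis_q_basis_sum (p q : ℕ) (hp : 0 < p) (hq : 0 < q)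
    (hpq : Nat.Coprime p q) (σ : Set ℤ) (hne : σ.Nonempty)
    (hstabp : ∀ x ∈ σ, x + p ∈ σ) (hstabq : ∀ x ∈ σ, x + q ∈ σ)
    (hfin₁ : (σ \ Gam p q).Finite) (hfin₂ : (Gam p q \ σ).Finite)
    (hcard : (σ \ Gam p q).ncard = (Gam p q \ σ).ncard) :
    (∀ i : ℕ, i < p → ∃ m : ℤ, IsLeast {x : ℤ | x ∈ σ ∧ x % (p : ℤ) = (i : ℤ)} m) ∧
    (∀ j : ℕ, j < q → ∃ m : ℤ, IsLeast {x : ℤ | x ∈ σ ∧ x % (q : ℤ) = (j : ℤ)} m) ∧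
    ∀ a b : ℕ → ℤ,
      (∀ i : ℕ, i < p → IsLeast {x : ℤ | x ∈ σ ∧ x % (p : ℤ) = (i : ℤ)} (a i)) →
      (∀ j : ℕ, j < q → IsLeast {x : ℤ | x ∈ σ ∧ x % (q : ℤ) = (j : ℤ)} (b j)) →
      2 * ∑ i ∈ Finset.range p, a i = (p : ℤ) * (q : ℤ) * ((p : ℤ) - 1) ∧
      2 * ∑ j ∈ Finset.range q, b j = (p : ℤ) * (q : ℤ) * ((q : ℤ) - 1) := by
  have hbdd := sigma_bddBelow hfin₁
  have hcop1 : IsCoprime (q : ℤ) (p : ℤ) := Nat.isCoprime_iff_coprime.mpr hpq.symm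
  have hcop2 : IsCoprime (p : ℤ) (q : ℤ) := Nat.isCoprime_iff_coprime.mpr hpq
  have hfin₁' : (σ \ Gam q p).Finite := by rwa [← Gam_comm]
  have hfin₂' : (Gam q p \ σ).Finite := by rwa [← Gam_comm]
  have hcard' : (σ \ Gam q p).ncard = (Gam q p \ σ).ncard := by rwa [← Gam_comm]
  refine ⟨fun i hi => least_exists p q hp hcop1 σ hne hstabq hbdd i hi,
    fun j hj => least_exists q p hq hcop2 σ hne hstabp hbdd j hj,
    fun a b ha hb => ⟨main_p p q hp hq hpq σ hstabp hfin₁ hfin₂ hcard a ha, ?_⟩⟩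
  have h := main_p q p hq hp hpq.symm σ hstabq hfin₁' hfin₂' hcard' b hb
  linear_combination h
end
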